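/- For every b ∈ {1, …, n}, every element s ∈ H_1(K̃_b) that does not lie in the image of θ_{1,b} : H_1(K_b) → H_1(K̃_b) satisfies ψ_{b,d}(s) ≠ 0 for every d with b ≤ d ≤ n. -/

import Mathlib

/-- An abstract simplicial complex on a vertex type `α`: a collection of nonempty
finite subsets of `α` closed under passing to nonempty subsets. -/
structure AbsSC (α : Type) where
  faces : Set (Finset α)
  not_empty_mem : ∅ ∉ faces
  down_closed : ∀ {s t : Finset α}, s ∈ faces → t ⊆ s → t.Nonempty → t ∈ faces

namespace AbsSC

variable {α : Type}

/-- The vertex set of an abstract simplicial complex. -/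
def vertexSet (K : AbsSC α) : Set α := {v | {v} ∈ K.faces}

/-- The type of `q`-simplices (faces with `q+1` vertices). -/
def simplices (K : AbsSC α) (q : ℕ) : Type :=
  {s : Finset α // s ∈ K.faces ∧ s.card = q + 1}

/-- The space of `q`-chains over `ℤ/2`: formal sums of `q`-simplices. -/
abbrev Chain (K : AbsSC α) (q : ℕ) : Type := K.simplices q →₀ ZMod 2

/-- The sum of the `q`-dimensional faces of a `(q+1)`-simplex. -/
noncomputable def faceChain (K : AbsSC α) (q : ℕ) (s : K.simplices (q + 1)) : K.Chain q :=
  ∑ t ∈ (s.1.powersetCard (q + 1)).attach,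
    Finsupp.single
      ⟨t.1, by
        obtain ⟨hsub, hcard⟩ := Finset.mem_powersetCard.mp t.2
        refine ⟨K.down_closed s.2.1 hsub ?_, hcard⟩
        rw [← Finset.card_pos, hcard]
        omega⟩
      (1 : ZMod 2)

/-- The boundary map `∂_{q+1} : C_{q+1}(K) → C_q(K)`, sending each `(q+1)`-simplex to
the sum of its `q`-dimensional faces. -/
noncomputable def boundary (K : AbsSC α) (q : ℕ) :
    K.Chain (q + 1) →ₗ[ZMod 2] K.Chain q :=
  Finsupp.lsum (ZMod 2) fun s => LinearMap.toSpanSingleton (ZMod 2) (K.Chain q) (K.faceChain q s)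

/-- The cycle subspace: `ker ∂_q` (all of `C_0` in degree `0`). -/
noncomputable def cycles (K : AbsSC α) : (q : ℕ) → Submodule (ZMod 2) (K.Chain q)
  | 0 => ⊤
  | q + 1 => LinearMap.ker (K.boundary q)

/-- The boundaries, viewed as a submodule of the cycles. -/
noncomputable def boundariesIn (K : AbsSC α) (q : ℕ) :
    Submodule (ZMod 2) (K.cycles q) :=
  Submodule.comap (K.cycles q).subtype (LinearMap.range (K.boundary q))

/-- The `q`-th simplicial homology over `ℤ/2`: `H_q(K) = ker ∂_q / im ∂_{q+1}`. -/
def Homology (K : AbsSC α) (q : ℕ) : Type :=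
  (K.cycles q) ⧸ (K.boundariesIn q)

noncomputable instance (K : AbsSC α) (q : ℕ) : AddCommGroup (K.Homology q) :=
  inferInstanceAs (AddCommGroup ((K.cycles q) ⧸ (K.boundariesIn q)))

noncomputable instance (K : AbsSC α) (q : ℕ) : Module (ZMod 2) (K.Homology q) :=
  inferInstanceAs (Module (ZMod 2) ((K.cycles q) ⧸ (K.boundariesIn q)))

/-- The homology class of a cycle. -/
noncomputable def hClass (K : AbsSC α) (q : ℕ) (c : K.Chain q) (hc : c ∈ K.cycles q) :
    K.Homology q :=
  Submodule.Quotient.mk ⟨c, hc⟩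

/-- The chain map induced by an inclusion of simplicial complexes. -/
noncomputable def chainMap (K L : AbsSC α) (h : K.faces ⊆ L.faces) (q : ℕ) :
    K.Chain q →ₗ[ZMod 2] L.Chain q :=
  Finsupp.lmapDomain (ZMod 2) (ZMod 2) fun s : K.simplices q =>
    (⟨s.1, h s.2.1, s.2.2⟩ : L.simplices q)

/-- `θ` is the map on `q`-th homology induced by the inclusion `K ⊆ L`: it sends the
class of every cycle `c` of `K` to the class of the image chain of `c` in `L`. -/
def InducedHom (K L : AbsSC α) (q : ℕ)
    (θ : K.Homology q →ₗ[ZMod 2] L.Homology q) : Prop :=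
  ∃ h : K.faces ⊆ L.faces,
    ∀ (c : K.Chain q) (hc : c ∈ K.cycles q),
      ∃ hc' : chainMap K L h q c ∈ L.cycles q,
        θ (K.hClass q c hc) = L.hClass q (chainMap K L h q c) hc'

end AbsSC

/-- The faces of the gluing stars `S = S_1 ⊔ ⋯ ⊔ S_k`: for each `j`, the vertex `{z j}`,
the vertices `{v}` for `v ∈ P j`, and the edges `{z j, v}` for `v ∈ P j`. -/
def starFaces {α : Type} [DecidableEq α] {k : ℕ} (P : Fin k → Set α) (z : Fin k → α) :
    Set (Finset α) :=
  {s | ∃ j : Fin k, s = {z j} ∨ ∃ v ∈ P j, s = {v} ∨ s = {z j, v}}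

section Tower

variable {W : ℕ → Type} [∀ i, AddCommGroup (W i)] [∀ i, Module (ZMod 2) (W i)]

/-- The composite `φ_{i,j} = φ_{j-1} ∘ ⋯ ∘ φ_i` of the connecting maps of a tower
(the identity when `i = j`). -/
noncomputable def comps (φ : ∀ i, W i →ₗ[ZMod 2] W (i + 1)) {i j : ℕ} (h : i ≤ j) :
    W i →ₗ[ZMod 2] W j :=
  Nat.leRecOn (C := fun m => W i →ₗ[ZMod 2] W m) h (fun {m} g => (φ m).comp g) LinearMap.id

/-- `s ∈ W b` has persistence interval `(b, d)` with finite death `d ∈ {b+1, …, n}`: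
`s ∉ im φ_{b-1}`, `φ_{b,d'}(s) ∉ im φ_{b-1,d'}` for all `b ≤ d' < d`, and
`φ_{b,d}(s) ∈ im φ_{b-1,d}`. -/
def HasPersIntervalFin (φ : ∀ i, W i →ₗ[ZMod 2] W (i + 1)) (n b d : ℕ) (s : W b) : Prop :=
  ∃ (_ : 1 ≤ b) (hbd : b < d) (_ : d ≤ n),
    s ∉ LinearMap.range (comps φ (Nat.sub_le b 1)) ∧
    (∀ (d' : ℕ) (hd' : b ≤ d'), d' < d →
      comps φ hd' s ∉ LinearMap.range (comps φ (Nat.le_trans (Nat.sub_le b 1) hd'))) ∧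
    comps φ (Nat.le_of_lt hbd) s ∈
      LinearMap.range (comps φ (Nat.le_trans (Nat.sub_le b 1) (Nat.le_of_lt hbd)))

/-- `s ∈ W b` has persistence interval `(b, ∞)`: `s ∉ im φ_{b-1}` and
`φ_{b,d'}(s) ∉ im φ_{b-1,d'}` for all `b ≤ d' ≤ n`. -/
def HasPersIntervalInf (φ : ∀ i, W i →ₗ[ZMod 2] W (i + 1)) (n b : ℕ) (s : W b) : Prop :=
  ∃ _ : 1 ≤ b,
    s ∉ LinearMap.range (comps φ (Nat.sub_le b 1)) ∧
    ∀ (d' : ℕ) (hd' : b ≤ d'), d' ≤ n →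
      comps φ hd' s ∉ LinearMap.range (comps φ (Nat.le_trans (Nat.sub_le b 1) hd'))

end Tower
section Aux

namespace AbsSC

variable {α : Type}

lemma simplexMap_injective (K L : AbsSC α) (h : K.faces ⊆ L.faces) (q : ℕ) :
    Function.Injective (fun s : K.simplices q => (⟨s.1, h s.2.1, s.2.2⟩ : L.simplices q)) :=
  by
  intro a b hab
  have h2 := congrArg Subtype.val hab
  exact Subtype.ext h2

lemma chainMap_apply (K L : AbsSC α) (h : K.faces ⊆ L.faces) (q : ℕ) (c : K.Chain q) :
    chainMap K L h q c =
      Finsupp.mapDomain (fun s : K.simplices q => (⟨s.1, h s.2.1, s.2.2⟩ : L.simplices q)) c :=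
  rfl

lemma chainMap_injective (K L : AbsSC α) (h : K.faces ⊆ L.faces) (q : ℕ) :
    Function.Injective (chainMap K L h q) := by
  intro a b hab
  exact Finsupp.mapDomain_injective (simplexMap_injective K L h q) hab

lemma chainMap_id (K : AbsSC α) (h : K.faces ⊆ K.faces) (q : ℕ) (c : K.Chain q) :
    chainMap K K h q c = c := by
  rw [chainMap_apply]
  have : (fun s : K.simplices q => (⟨s.1, h s.2.1, s.2.2⟩ : K.simplices q)) = id := by
    funext s; exact Subtype.ext rfl
  rw [this]; exact Finsupp.mapDomain_id

lemma chainMap_comp (K L M : AbsSC α) (h1 : K.faces ⊆ L.faces) (h2 : L.faces ⊆ M.faces)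
    (q : ℕ) (c : K.Chain q) :
    chainMap L M h2 q (chainMap K L h1 q c) = chainMap K M (h1.trans h2) q c := by
  rw [chainMap_apply, chainMap_apply, chainMap_apply]; erw [← Finsupp.mapDomain_comp]
  rfl

lemma chainMap_faceChain (K L : AbsSC α) (h : K.faces ⊆ L.faces) (q : ℕ)
    (s : K.simplices (q + 1)) :
    chainMap K L h q (K.faceChain q s) =
      L.faceChain q ⟨s.1, h s.2.1, s.2.2⟩ := by
  rw [chainMap_apply]
  unfold faceChain
  rw [Finsupp.mapDomain_finset_sum]
  refine Finset.sum_congr rfl fun t _ => ?_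
  exact Finsupp.mapDomain_single

lemma boundary_chainMap (K L : AbsSC α) (h : K.faces ⊆ L.faces) (q : ℕ) (c : K.Chain (q + 1)) :
    L.boundary q (chainMap K L h (q + 1) c) = chainMap K L h q (K.boundary q c) := by
  have hmaps : (L.boundary q).comp (chainMap K L h (q + 1))
      = (chainMap K L h q).comp (K.boundary q) := by
    apply Finsupp.lhom_ext
    intro s a
    simp only [LinearMap.comp_apply]
    rw [chainMap_apply, Finsupp.mapDomain_single]
    unfold boundary
    rw [Finsupp.lsum_single]; erw [Finsupp.lsum_single]
    simp only [LinearMap.toSpanSingleton_apply]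
    rw [map_smul, chainMap_faceChain]
  exact congrFun (congrArg (fun f => f.toFun) hmaps) c

lemma inducedHom_apply {K L : AbsSC α} {q : ℕ} {θ : K.Homology q →ₗ[ZMod 2] L.Homology q}
    (hθ : InducedHom K L q θ) (h : K.faces ⊆ L.faces) (c : K.Chain q) (hc : c ∈ K.cycles q) :
    ∃ hc' : chainMap K L h q c ∈ L.cycles q,
      θ (K.hClass q c hc) = L.hClass q (chainMap K L h q c) hc' := by
  obtain ⟨h0, hθ0⟩ := hθ
  exact hθ0 c hc

lemma hClass_congr (K : AbsSC α) (q : ℕ) {c c' : K.Chain q} (hcc : c = c')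
    (hc : c ∈ K.cycles q) (hc' : c' ∈ K.cycles q) :
    K.hClass q c hc = K.hClass q c' hc' := by
  subst hcc; rfl

end AbsSC

lemma comps_self {W : ℕ → Type} [∀ i, AddCommGroup (W i)] [∀ i, Module (ZMod 2) (W i)]
    (φ : ∀ i, W i →ₗ[ZMod 2] W (i + 1)) {i : ℕ} (h : i ≤ i) : comps φ h = LinearMap.id :=
  Nat.leRecOn_self _

lemma comps_succ {W : ℕ → Type} [∀ i, AddCommGroup (W i)] [∀ i, Module (ZMod 2) (W i)]
    (φ : ∀ i, W i →ₗ[ZMod 2] W (i + 1)) {i j : ℕ} (h : i ≤ j) (h' : i ≤ j + 1) :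
    comps φ h' = (φ j).comp (comps φ h) :=
  Nat.leRecOn_succ h _

end Aux
set_option maxHeartbeats 1600000 in

/-- for every `b ∈ {1, …, n}`, every `s ∈ H_1(K̃_b)` not lying in the
image of `θ_{1,b} : H_1(K_b) → H_1(K̃_b)` satisfies `ψ_{b,d}(s) ≠ 0` for every
`b ≤ d ≤ n`. -/
theorem stmt16 {α : Type} [DecidableEq α] (n k : ℕ)
    (K Kt : ℕ → AbsSC α)
    (hK0 : (K 0).faces = ∅)
    (hKt0 : (Kt 0).faces = ∅)
    (hKmono : ∀ i, i < n → (K i).faces ⊆ (K (i + 1)).faces)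
    (hKtmono : ∀ i, i < n → (Kt i).faces ⊆ (Kt (i + 1)).faces)
    (P : Fin k → Set α)
    (hPne : ∀ j, (P j).Nonempty)
    (hPdisj : Pairwise (Function.onFun Disjoint P))
    (hPunion : (⋃ j, P j) = (K 1).vertexSet)
    (z : Fin k → α)
    (hzinj : Function.Injective z)
    (hznew : ∀ (j : Fin k) (i : ℕ), i ≤ n → z j ∉ (K i).vertexSet)
    (hKt : ∀ i, 1 ≤ i → i ≤ n → (Kt i).faces = (K i).faces ∪ starFaces P z)
    (φ : ∀ i : ℕ, (K i).Homology 1 →ₗ[ZMod 2] (K (i + 1)).Homology 1)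
    (ψ : ∀ i : ℕ, (Kt i).Homology 1 →ₗ[ZMod 2] (Kt (i + 1)).Homology 1)
    (θ : ∀ i : ℕ, (K i).Homology 1 →ₗ[ZMod 2] (Kt i).Homology 1)
    (hφ : ∀ i, i < n → AbsSC.InducedHom (K i) (K (i + 1)) 1 (φ i))
    (hψ : ∀ i, i < n → AbsSC.InducedHom (Kt i) (Kt (i + 1)) 1 (ψ i))
    (hθ : ∀ i, i ≤ n → AbsSC.InducedHom (K i) (Kt i) 1 (θ i))
    (hsq : ∀ i, i < n → (θ (i + 1)).comp (φ i) = (ψ i).comp (θ i))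
    (b : ℕ) (hb1 : 1 ≤ b) (hbn : b ≤ n)
    (s : (Kt b).Homology 1)
    (hs : s ∉ LinearMap.range (θ b)) :
    ∀ (d : ℕ) (hd : b ≤ d), d ≤ n → comps ψ hd s ≠ 0 := by
  classical
  -- basic inclusions
  have hsub : (K b).faces ⊆ (Kt b).faces := by
    rw [hKt b hb1 hbn]; exact Set.subset_union_left
  have hKtincl : ∀ j, ∀ i, i ≤ j → j ≤ n → (Kt i).faces ⊆ (Kt j).faces := by
    intro j
    induction j with
    | zero =>
      intro i hi _
      have : i = 0 := Nat.le_zero.mp hi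
      subst this; exact subset_rfl
    | succ j ih =>
      intro i hi hjn
      rcases Nat.lt_or_ge i (j + 1) with hlt | hge
      · exact (ih i (by omega) (by omega)).trans (hKtmono j (by omega))
      · have : i = j + 1 := by omega
        subst this; exact subset_rfl
  -- represent s by a cycle
  obtain ⟨⟨ct, hct⟩, rfl⟩ := Submodule.Quotient.mk_surjective _ s
  have hsct : (Submodule.Quotient.mk (⟨ct, hct⟩ : (Kt b).cycles 1) : (Kt b).Homology 1)
      = (Kt b).hClass 1 ct hct := rfl
  rw [hsct] at hs ⊢
  -- the composite map sends the class of ct to the class of its image chain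
  have key : ∀ d (hd : b ≤ d), ∀ hdn : d ≤ n,
      ∃ hc' : AbsSC.chainMap (Kt b) (Kt d) (hKtincl d b hd hdn) 1 ct ∈ (Kt d).cycles 1,
        comps ψ hd ((Kt b).hClass 1 ct hct)
          = (Kt d).hClass 1 (AbsSC.chainMap (Kt b) (Kt d) (hKtincl d b hd hdn) 1 ct) hc' := by
    intro d hd
    induction d, hd using Nat.le_induction with
    | base =>
      intro hbn'
      refine ⟨?_, ?_⟩
      · rw [AbsSC.chainMap_id]; exact hct
      · rw [comps_self]
        exact AbsSC.hClass_congr _ 1 (AbsSC.chainMap_id _ _ 1 ct).symm hct _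
    | succ d hd ih =>
      intro hdn'
      have hdn : d ≤ n := by omega
      obtain ⟨hc', heq⟩ := ih hdn
      obtain ⟨hc'', heq'⟩ := AbsSC.inducedHom_apply (hψ d (by omega)) (hKtmono d (by omega))
        (AbsSC.chainMap (Kt b) (Kt d) (hKtincl d b hd hdn) 1 ct) hc'
      have hcomp := AbsSC.chainMap_comp (Kt b) (Kt d) (Kt (d + 1))
        (hKtincl d b hd hdn) (hKtmono d (by omega)) 1 ct
      refine ⟨by rw [← hcomp]; exact hc'', ?_⟩
      rw [comps_succ ψ hd, LinearMap.comp_apply, heq, heq']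
      exact AbsSC.hClass_congr _ 1 hcomp hc'' _
  intro d hd hdn hzero
  obtain ⟨hc', heq⟩ := key d hd hdn
  rw [heq] at hzero
  -- the image chain is a boundary in Kt d
  set c' := AbsSC.chainMap (Kt b) (Kt d) (hKtincl d b hd hdn) 1 ct with hc'def
  have hmem : (⟨c', hc'⟩ : (Kt d).cycles 1) ∈ (Kt d).boundariesIn 1 :=
    (Submodule.Quotient.mk_eq_zero _).mp hzero
  obtain ⟨w, hw⟩ : c' ∈ LinearMap.range ((Kt d).boundary 1) := hmem
  -- every edge in the support of a boundary avoids the new vertices z j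
  have hd1 : 1 ≤ d := le_trans hb1 hd
  have hbdsupp : ∀ e : (Kt d).simplices 1, e ∈ ((Kt d).boundary 1 w).support →
      ∀ j : Fin k, z j ∉ e.1 := by
    intro e he j hzj
    rw [AbsSC.boundary, Finsupp.lsum_apply] at he
    obtain ⟨t, _, he2⟩ := Finsupp.mem_support_finset_sum e he
    have he3 : e ∈ ((Kt d).faceChain 1 t).support := by
      have := Finsupp.support_smul (b := w t) (g := (Kt d).faceChain 1 t)
      exact this (by simpa using he2)
    rw [AbsSC.faceChain] at he3
    obtain ⟨u, _, he4⟩ := Finsupp.mem_support_finset_sum e he3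
    have he5 := Finsupp.support_single_subset he4
    replace he5 := Finset.mem_singleton.mp he5
    -- e.1 ⊆ t.1
    have hu := Finset.mem_powersetCard.mp u.2
    have hesub : e.1 ⊆ t.1 := by rw [he5]; exact hu.1
    -- t.1 ∈ (K d).faces since star faces have card ≤ 2 < 3
    have ht : t.1 ∈ (K d).faces := by
      have h0 := (Set.ext_iff.mp (hKt d hd1 hdn) t.1).mp t.2.1
      rcases h0 with h1 | h1
      · exact h1
      · exfalso
        obtain ⟨j', h2⟩ := h1
        have hcard := t.2.2
        rcases h2 with h2 | ⟨v, _, h2 | h2⟩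
        · rw [h2, Finset.card_singleton] at hcard; omega
        · rw [h2, Finset.card_singleton] at hcard; omega
        · rw [h2] at hcard
          have := Finset.card_insert_le (z j') {v}
          rw [hcard, Finset.card_singleton] at this; omega
    -- then z j would be a vertex of K d
    have hzv : z j ∈ (K d).vertexSet := by
      have : ({z j} : Finset α) ⊆ t.1 := Finset.singleton_subset_iff.mpr (hesub hzj)
      exact (K d).down_closed ht this ⟨z j, Finset.mem_singleton_self _⟩
    exact hznew j d hdn hzv
  -- hence every edge of ct avoids the z j and lies in K b
  have hctz : ∀ e : (Kt b).simplices 1, e ∈ ct.support → ∀ j : Fin k, z j ∉ e.1 := by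
    intro e he j
    set ι := fun t : (Kt b).simplices 1 =>
      (⟨t.1, hKtincl d b hd hdn t.2.1, t.2.2⟩ : (Kt d).simplices 1) with hι
    have hιinj : Function.Injective ι := AbsSC.simplexMap_injective _ _ (hKtincl d b hd hdn) 1
    have hmem' : ι e ∈ ((Kt d).boundary 1 w).support := by
      rw [hw, hc'def, AbsSC.chainMap_apply]; erw [Finsupp.mem_support_iff,
        Finsupp.mapDomain_apply hιinj]
      exact Finsupp.mem_support_iff.mp he
    exact hbdsupp (ι e) hmem' j
  have hctK : ∀ e : (Kt b).simplices 1, e ∈ ct.support → e.1 ∈ (K b).faces := by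
    intro e he
    have h1 := (Set.ext_iff.mp (hKt b hb1 hbn) e.1).mp e.2.1
    rcases h1 with h1 | h1
    · exact h1
    · exfalso
      obtain ⟨j, h2⟩ := h1
      have hcard := e.2.2
      rcases h2 with h2 | ⟨v, _, h2 | h2⟩
      · rw [h2, Finset.card_singleton] at hcard; omega
      · rw [h2, Finset.card_singleton] at hcard; omega
      · exact hctz e he j (by rw [h2]; exact Finset.mem_insert_self _ _)
  -- pull ct back to a cycle of K b
  set ι0 := fun t : (K b).simplices 1 =>
    (⟨t.1, hsub t.2.1, t.2.2⟩ : (Kt b).simplices 1) with hι0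
  have hι0inj : Function.Injective ι0 := AbsSC.simplexMap_injective _ _ hsub 1
  set c : (K b).Chain 1 := Finsupp.comapDomain ι0 ct hι0inj.injOn with hcdef
  have hmapc : AbsSC.chainMap (K b) (Kt b) hsub 1 c = ct := by
    have hl : (ct.support : Set ((Kt b).simplices 1)) ⊆ Set.range ι0 := by
      intro x hx
      exact ⟨⟨x.1, hctK x hx, x.2.2⟩, Subtype.ext rfl⟩
    have h2 := Finsupp.mapDomain_comapDomain ι0 hι0inj ct hl
    rw [AbsSC.chainMap_apply, hcdef]
    exact h2
  have hcyc : c ∈ (K b).cycles 1 := by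
    show (K b).boundary 0 c = 0
    have hbd := AbsSC.boundary_chainMap (K b) (Kt b) hsub 0 c
    rw [hmapc] at hbd
    have hct0 : (Kt b).boundary 0 ct = 0 := hct
    rw [hct0] at hbd
    have := AbsSC.chainMap_injective (K b) (Kt b) hsub 0
    apply this
    rw [← hbd, map_zero]
  obtain ⟨hccyc', hθeq⟩ := AbsSC.inducedHom_apply (hθ b hbn) hsub c hcyc
  exact hs ⟨(K b).hClass 1 c hcyc, by
    rw [hθeq]; exact AbsSC.hClass_congr _ 1 hmapc hccyc' hct⟩
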